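/- The horizontal compression algorithm terminates: applying the compression rules level by level from level 1 up to the height of the input derivation, collapsing within each level pairs of nodes labeled by the same formula, and then running a second pass of MDE rules, halts after finitely many steps and produces a DLDS in which no level contains two distinct nodes labeled by the same formula. -/
import Mathlib

/-- Formulas of the purely implicational fragment `M⊃` of minimal logic. -/
inductive Formula : Type
  | var : ℕ → Formula
  | imp : Formula → Formula → Formula
  deriving DecidableEq

/-- Colors of deduction edges: an ordinal color (with `ord 0` the default
color of uncollapsed edges) or the special color `λ`. -/
inductive Color : Type
  | ord : ℕ → Color
  | lam : Color
  deriving DecidableEq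

/-- A DLDS with an explicit set `alive` of live (not yet collapsed-away)
nodes. -/
structure LDLDS (V : Type) where
  alive : Finset V
  ED : Color → V → V → Prop
  EA : V → V → Prop
  r : V
  level : V → ℕ
  l : V → Formula

/-- Merging `v` into `u`. -/
def merge {V : Type} [DecidableEq V] (u v x : V) : V := if x = v then u else x

/-- The result of collapsing node `v` into node `u`: `v` is removed from the
live nodes and all edges are transported along the merge. -/
def mergeD {V : Type} [DecidableEq V] (D : LDLDS V) (u v : V) : LDLDS V where
  alive := D.alive.erase v
  ED := fun c a b => ∃ a' b', D.ED c a' b' ∧ a = merge u v a' ∧ b = merge u v b'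
  EA := fun a b => ∃ a' b', D.EA a' b' ∧ a = merge u v a' ∧ b = merge u v b'
  r := merge u v D.r
  level := D.level
  l := D.l

/-- One step of the horizontal compression algorithm: collapse two distinct
live nodes at the same level labeled by the same formula. -/
def HStep {V : Type} [DecidableEq V] (D D' : LDLDS V) : Prop :=
  ∃ u v, u ∈ D.alive ∧ v ∈ D.alive ∧ u ≠ v ∧
    D.level u = D.level v ∧ D.l u = D.l v ∧ D' = mergeD D u v

/-- the horizontal compression algorithm terminates — the
collapse-step relation is well-founded — and any structure on which no
further step is possible has no level containing two distinct (live) nodes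
labeled by the same formula. -/
theorem horizontal_compression_terminates {V : Type} [DecidableEq V] :
    WellFounded (fun D' D : LDLDS V => HStep D D') ∧
    ∀ D : LDLDS V, (∀ D', ¬ HStep D D') →
      ∀ u v, u ∈ D.alive → v ∈ D.alive → u ≠ v →
        D.level u = D.level v → D.l u ≠ D.l v := by
  constructor
  · have h : ∀ D' D : LDLDS V, HStep D D' → D'.alive.card < D.alive.card := by
      rintro D' D ⟨u, v, hu, hv, hne, _, _, rfl⟩
      exact Finset.card_erase_lt_of_mem hv
    exact Subrelation.wf (fun {D' D} hs => h _ _ hs)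
      (measure (fun D : LDLDS V => D.alive.card)).wf
  · intro D hD u v hu hv hne hlev hl
    exact hD _ ⟨u, v, hu, hv, hne, hlev, hl, rfl⟩
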